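/- The functions u(x) = 3/5 − (2/5)·tanh(x), v(x) = (1 + tanh(x))², w(x) = 1 − tanh²(x) satisfy, for all real x, the three equations: u'' + 3u' + u·(41 − 41u − (41/5)v − (31/5)w) = 0, v'' + 3v' + v·(41 − 69u − (34/5)v − (4/5)w) = 0, and w'' + 3w' + w·(41 − 51u − (36/5)v − (6/5)w) = 0. -/

import Mathlib

open Real

lemma tanh_hasDeriv (x : ℝ) : HasDerivAt Real.tanh (1 - Real.tanh x ^ 2) x := by
  have hc : Real.cosh x ≠ 0 := (Real.cosh_pos x).ne'
  have h : HasDerivAt (fun y => Real.sinh y / Real.cosh y)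
      ((Real.cosh x * Real.cosh x - Real.sinh x * Real.sinh x) / Real.cosh x ^ 2) x :=
    (Real.hasDerivAt_sinh x).div (Real.hasDerivAt_cosh x) hc
  have heq : (Real.cosh x * Real.cosh x - Real.sinh x * Real.sinh x) / Real.cosh x ^ 2
      = 1 - Real.tanh x ^ 2 := by
    rw [Real.tanh_eq_sinh_div_cosh]
    field_simp
  have : HasDerivAt (fun y => Real.sinh y / Real.cosh y) (1 - Real.tanh x ^ 2) x := heq ▸ h
  exact this.congr_of_eventuallyEq (by
    filter_upwards with y
    rw [Real.tanh_eq_sinh_div_cosh])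

theorem stmt7
    (u v w : ℝ → ℝ)
    (hu : ∀ x, u x = 3 / 5 - (2 / 5) * Real.tanh x)
    (hv : ∀ x, v x = (1 + Real.tanh x) ^ 2)
    (hw : ∀ x, w x = 1 - Real.tanh x ^ 2) :
    (∀ x : ℝ, deriv (deriv u) x + 3 * deriv u x
      + u x * (41 - 41 * u x - (41 / 5) * v x - (31 / 5) * w x) = 0) ∧
    (∀ x : ℝ, deriv (deriv v) x + 3 * deriv v x
      + v x * (41 - 69 * u x - (34 / 5) * v x - (4 / 5) * w x) = 0) ∧
    (∀ x : ℝ, deriv (deriv w) x + 3 * deriv w x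
      + w x * (41 - 51 * u x - (36 / 5) * v x - (6 / 5) * w x) = 0) := by
  have hu' : u = fun x => 3 / 5 - (2 / 5) * Real.tanh x := funext hu
  have hv' : v = fun x => (1 + Real.tanh x) ^ 2 := funext hv
  have hw' : w = fun x => 1 - Real.tanh x ^ 2 := funext hw
  subst hu' hv' hw'
  have hdu : ∀ x, HasDerivAt (fun x => 3 / 5 - (2 / 5) * Real.tanh x)
      (-(2 / 5) * (1 - Real.tanh x ^ 2)) x := by
    intro x
    have := ((tanh_hasDeriv x).const_mul (2/5 : ℝ)).const_sub (3/5 : ℝ)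
    refine this.congr_deriv ?_; ring
  have hdv : ∀ x, HasDerivAt (fun x => (1 + Real.tanh x) ^ 2)
      (2 * (1 + Real.tanh x) * (1 - Real.tanh x ^ 2)) x := by
    intro x
    have := ((tanh_hasDeriv x).const_add (1 : ℝ)).pow 2
    refine this.congr_deriv ?_; push_cast; ring
  have hdw : ∀ x, HasDerivAt (fun x => 1 - Real.tanh x ^ 2)
      (-(2 * Real.tanh x * (1 - Real.tanh x ^ 2))) x := by
    intro x
    have := ((tanh_hasDeriv x).pow 2).const_sub (1 : ℝ)
    refine this.congr_deriv ?_; push_cast; ring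
  have hDu : deriv (fun x => 3 / 5 - (2 / 5) * Real.tanh x)
      = fun x => -(2 / 5) * (1 - Real.tanh x ^ 2) := funext fun x => (hdu x).deriv
  have hDv : deriv (fun x => (1 + Real.tanh x) ^ 2)
      = fun x => 2 * (1 + Real.tanh x) * (1 - Real.tanh x ^ 2) := funext fun x => (hdv x).deriv
  have hDw : deriv (fun x => 1 - Real.tanh x ^ 2)
      = fun x => -(2 * Real.tanh x * (1 - Real.tanh x ^ 2)) := funext fun x => (hdw x).deriv
  -- second derivatives
  have hddu : ∀ x, HasDerivAt (fun x => -(2 / 5) * (1 - Real.tanh x ^ 2))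
      ((4/5) * Real.tanh x * (1 - Real.tanh x ^ 2)) x := by
    intro x
    have := (((tanh_hasDeriv x).pow 2).const_sub (1 : ℝ)).const_mul (-(2/5) : ℝ)
    refine this.congr_deriv ?_; push_cast; ring
  have hddv : ∀ x, HasDerivAt (fun x => 2 * (1 + Real.tanh x) * (1 - Real.tanh x ^ 2))
      (2 * ((1 - Real.tanh x ^ 2) * (1 - Real.tanh x ^ 2)
        + (1 + Real.tanh x) * (-(2 * Real.tanh x * (1 - Real.tanh x ^ 2))))) x := by
    intro x
    have h1 : HasDerivAt (fun x => (1 + Real.tanh x) * (1 - Real.tanh x ^ 2))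
        ((1 - Real.tanh x ^ 2) * (1 - Real.tanh x ^ 2)
          + (1 + Real.tanh x) * (-(2 * Real.tanh x * (1 - Real.tanh x ^ 2)))) x := by
      have := ((tanh_hasDeriv x).const_add (1 : ℝ)).mul
        (((tanh_hasDeriv x).pow 2).const_sub (1 : ℝ))
      refine this.congr_deriv ?_; push_cast [Pi.pow_apply]; ring
    have h2 := h1.const_mul (2 : ℝ)
    have heq : (fun x => 2 * (1 + Real.tanh x) * (1 - Real.tanh x ^ 2))
        = fun y => 2 * ((1 + Real.tanh y) * (1 - Real.tanh y ^ 2)) := by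
      funext y; ring
    rw [heq]
    exact h2
  have hddw : ∀ x, HasDerivAt (fun x => -(2 * Real.tanh x * (1 - Real.tanh x ^ 2)))
      (-(2 * ((1 - Real.tanh x ^ 2) * (1 - Real.tanh x ^ 2)
        + Real.tanh x * (-(2 * Real.tanh x * (1 - Real.tanh x ^ 2)))))) x := by
    intro x
    have h1 : HasDerivAt (fun x => Real.tanh x * (1 - Real.tanh x ^ 2))
        ((1 - Real.tanh x ^ 2) * (1 - Real.tanh x ^ 2)
          + Real.tanh x * (-(2 * Real.tanh x * (1 - Real.tanh x ^ 2)))) x := by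
      have := (tanh_hasDeriv x).mul (((tanh_hasDeriv x).pow 2).const_sub (1 : ℝ))
      refine this.congr_deriv ?_; push_cast [Pi.pow_apply]; ring
    have h2 := h1.const_mul (-2 : ℝ)
    have heq : (fun x => -(2 * Real.tanh x * (1 - Real.tanh x ^ 2)))
        = fun y => -2 * (Real.tanh y * (1 - Real.tanh y ^ 2)) := by
      funext y; ring
    rw [heq]
    refine h2.congr_deriv ?_; ring
  refine ⟨fun x => ?_, fun x => ?_, fun x => ?_⟩
  · rw [hDu, (hddu x).deriv]; simp only []; ring
  · rw [hDv, (hddv x).deriv]; simp only []; ring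
  · rw [hDw, (hddw x).deriv]; simp only []; ring
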